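/- Let $\rho : \mathbb{T}^d \to [0,\infty)$ be bounded with $M := \int_{\mathbb{T}^d}\rho\,dx > 0$, and let $g \in H^1(\mathbb{T}^d)$ with mean $\bar g$. Then $M|\bar g| \leq \left|\int_{\mathbb{T}^d} \rho g\,dx\right| + \|\rho - M\|_{L^2}\,\|\nabla g\|_{L^2}$, and consequently, for every $p$ with the Sobolev embedding $H^1(\mathbb{T}^d) \hookrightarrow L^p(\mathbb{T}^d)$, $\|g\|_{L^p} \leq \left(C_p + \frac{\|\rho\|_{L^2}}{M}\right)\|\nabla g\|_{L^2} + \frac{1}{M^{1/2}}\|\sqrt{\rho}\, g\|_{L^2}$. -/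

import Mathlib

open MeasureTheory
open scoped ENNReal

private lemma mem2 {Ω : Type*} [MeasurableSpace Ω] {μ : Measure Ω} {f : Ω → ℝ}
    (hm : AEStronglyMeasurable f μ) (h2 : Integrable (fun x => f x ^ 2) μ) :
    MemLp f 2 μ := by
  rw [← memLp_norm_rpow_iff hm two_ne_zero ENNReal.ofNat_ne_top,
    ENNReal.div_self two_ne_zero ENNReal.ofNat_ne_top, memLp_one_iff_integrable]
  have : (fun x => ‖f x‖ ^ (2 : ℝ≥0∞).toReal) = fun x => f x ^ 2 := by
    funext x
    rw [ENNReal.toReal_ofNat, Real.norm_eq_abs, show ((2:ℝ)) = ((2:ℕ):ℝ) by norm_num,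
      Real.rpow_natCast, sq_abs]
  rw [this]; exact h2

private lemma cs_int {Ω : Type*} [MeasurableSpace Ω] {μ : Measure Ω} {f h : Ω → ℝ}
    (hfm : AEStronglyMeasurable f μ) (hhm : AEStronglyMeasurable h μ)
    (hf2 : Integrable (fun x => f x ^ 2) μ) (hh2 : Integrable (fun x => h x ^ 2) μ) :
    ∫ x, |f x| * |h x| ∂μ ≤
      Real.sqrt (∫ x, f x ^ 2 ∂μ) * Real.sqrt (∫ x, h x ^ 2 ∂μ) := by
  have hpq : (2:ℝ).HolderConjugate 2 := ⟨by norm_num, by norm_num, by norm_num⟩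
  have hf : MemLp f (ENNReal.ofReal 2) μ := by
    rw [show ENNReal.ofReal 2 = 2 by norm_num]; exact mem2 hfm hf2
  have hh : MemLp h (ENNReal.ofReal 2) μ := by
    rw [show ENNReal.ofReal 2 = 2 by norm_num]; exact mem2 hhm hh2
  have := integral_mul_norm_le_Lp_mul_Lq (μ := μ) hpq hf hh
  have e : ∀ (u : Ω → ℝ), (∫ x, ‖u x‖ ^ (2:ℝ) ∂μ) = ∫ x, u x ^ 2 ∂μ := fun u => by
    congr 1; funext x
    rw [Real.norm_eq_abs, show ((2:ℝ)) = ((2:ℕ):ℝ) by norm_num, Real.rpow_natCast, sq_abs]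
  rw [e f, e h] at this
  simp only [Real.norm_eq_abs] at this
  calc ∫ x, |f x| * |h x| ∂μ ≤ (∫ x, f x ^ 2 ∂μ) ^ (1/(2:ℝ)) * (∫ x, h x ^ 2 ∂μ) ^ (1/(2:ℝ)) := this
    _ = _ := by rw [← Real.sqrt_eq_rpow, ← Real.sqrt_eq_rpow]

private lemma mink {Ω : Type*} [MeasurableSpace Ω] {μ : Measure Ω}
    [IsProbabilityMeasure μ] {f : Ω → ℝ} {p : ℝ} (hp : 1 ≤ p)
    (hm : AEStronglyMeasurable f μ) (hfp : Integrable (fun x => |f x| ^ p) μ) (c : ℝ) :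
    (∫ x, |f x| ^ p ∂μ) ^ (1 / p) ≤ (∫ x, |f x - c| ^ p ∂μ) ^ (1 / p) + |c| := by
  set P := ENNReal.ofReal p with hP
  have hp0 : (0:ℝ) < p := lt_of_lt_of_le one_pos hp
  have hP0 : P ≠ 0 := by simp [hP, ENNReal.ofReal_eq_zero]; linarith
  have hPtop : P ≠ ⊤ := ENNReal.ofReal_ne_top
  have hPr : P.toReal = p := ENNReal.toReal_ofReal hp0.le
  have habs : ∀ (u : Ω → ℝ), (fun x => ‖u x‖ ^ P.toReal) = fun x => |u x| ^ p := by
    intro u; funext x; rw [hPr, Real.norm_eq_abs]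
  have hmemf : MemLp f P μ := by
    rw [← memLp_norm_rpow_iff hm hP0 hPtop, ENNReal.div_self hP0 hPtop,
      memLp_one_iff_integrable, habs]
    exact hfp
  have hmemc : MemLp (fun _ : Ω => c) P μ := memLp_const c
  have hmemfc : MemLp (fun x => f x - c) P μ := hmemf.sub hmemc
  have htri : eLpNorm f P μ ≤ eLpNorm (fun x => f x - c) P μ + eLpNorm (fun _ : Ω => c) P μ := by
    have h1 : f = (fun x => f x - c) + fun _ => c := by funext x; simp
    calc eLpNorm f P μ = eLpNorm ((fun x => f x - c) + fun _ => c) P μ := by rw [← h1]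
      _ ≤ _ := eLpNorm_add_le hmemfc.1 hmemc.1 (by
          rw [hP]; exact ENNReal.one_le_ofReal.mpr hp)
  have hconst : eLpNorm (fun _ : Ω => c) P μ = ENNReal.ofReal |c| := by
    rw [eLpNorm_const c hP0 (IsProbabilityMeasure.ne_zero μ)]
    simp [Real.enorm_eq_ofReal_abs, Real.norm_eq_abs]
  have heq : ∀ (u : Ω → ℝ), MemLp u P μ →
      eLpNorm u P μ = ENNReal.ofReal ((∫ x, |u x| ^ p ∂μ) ^ (1/p)) := by
    intro u hu
    rw [hu.eLpNorm_eq_integral_rpow_norm hP0 hPtop, habs, hPr, one_div]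
  have hX : (0:ℝ) ≤ (∫ x, |f x - c| ^ p ∂μ) ^ (1/p) :=
    Real.rpow_nonneg (integral_nonneg fun x => Real.rpow_nonneg (abs_nonneg _) _) _
  rw [heq f hmemf, heq _ hmemfc, hconst, ← ENNReal.ofReal_add hX (abs_nonneg c)] at htri
  exact (ENNReal.ofReal_le_ofReal_iff (by positivity)).mp htri

/-- Control of the mean and of Lebesgue norms by the gradient and a degenerate
weighted `L²` norm. The torus is modelled as a probability space; the classical
Poincaré inequality (constant 1) and the Sobolev embedding with constant `Cp`
are given as hypotheses linking `g` to its gradient `G`. -/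
theorem stmt10
    {Ω : Type*} [MeasurableSpace Ω] (μ : Measure Ω) [IsProbabilityMeasure μ]
    {F : Type*} [NormedAddCommGroup F]
    (ρ : Ω → ℝ) (B M : ℝ) (g : Ω → ℝ) (G : Ω → F) (p Cp : ℝ)
    (hρ_meas : Measurable ρ) (hρ_nonneg : ∀ x, 0 ≤ ρ x) (hρ_bdd : ∀ x, ρ x ≤ B)
    (hM : M = ∫ x, ρ x ∂μ) (hMpos : 0 < M)
    (hp : 1 ≤ p) (hCp : 0 ≤ Cp)
    (hg : Integrable g μ) (hg2 : Integrable (fun x => (g x) ^ 2) μ)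
    (hρg : Integrable (fun x => ρ x * g x) μ)
    (hρg2 : Integrable (fun x => ρ x * (g x) ^ 2) μ)
    (hρ2 : Integrable (fun x => (ρ x) ^ 2) μ)
    (hρM2 : Integrable (fun x => (ρ x - M) ^ 2) μ)
    (hgp : Integrable (fun x => |g x| ^ p) μ)
    (hG2 : Integrable (fun x => ‖G x‖ ^ 2) μ)
    (hPoincare : Real.sqrt (∫ x, (g x - ∫ y, g y ∂μ) ^ 2 ∂μ)
        ≤ Real.sqrt (∫ x, ‖G x‖ ^ 2 ∂μ))
    (hSobolev : (∫ x, |g x - ∫ y, g y ∂μ| ^ p ∂μ) ^ (1 / p)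
        ≤ Cp * Real.sqrt (∫ x, ‖G x‖ ^ 2 ∂μ)) :
    M * |∫ x, g x ∂μ|
        ≤ |∫ x, ρ x * g x ∂μ|
          + Real.sqrt (∫ x, (ρ x - M) ^ 2 ∂μ) * Real.sqrt (∫ x, ‖G x‖ ^ 2 ∂μ)
    ∧ (∫ x, |g x| ^ p ∂μ) ^ (1 / p)
        ≤ (Cp + Real.sqrt (∫ x, (ρ x) ^ 2 ∂μ) / M) * Real.sqrt (∫ x, ‖G x‖ ^ 2 ∂μ)
          + (1 / Real.sqrt M) * Real.sqrt (∫ x, ρ x * (g x) ^ 2 ∂μ) := by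
  set c : ℝ := ∫ x, g x ∂μ with hc
  have hρint : Integrable ρ μ := by
    refine memLp_one_iff_integrable.mp (MemLp.of_bound hρ_meas.aestronglyMeasurable B
      (Filter.Eventually.of_forall fun x => ?_))
    rw [Real.norm_eq_abs, abs_of_nonneg (hρ_nonneg x)]; exact hρ_bdd x
  have hgm : AEStronglyMeasurable g μ := hg.1
  -- integrability of (g - c)^2
  have hgc2 : Integrable (fun x => (g x - c) ^ 2) μ := by
    have : Integrable (fun x => g x ^ 2 - (2*c) * g x + c ^ 2) μ :=
      (hg2.sub (hg.const_mul (2*c))).add (integrable_const _)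
    exact this.congr (Filter.Eventually.of_forall fun x => by ring)
  -- the cross integral
  have hcross : ∫ x, (ρ x - M) * (g x - c) ∂μ = (∫ x, ρ x * g x ∂μ) - M * c := by
    have h1 : (fun x => (ρ x - M) * (g x - c))
        = fun x => (ρ x * g x - c * ρ x - M * g x) + M * c := by funext x; ring
    have hI2 : Integrable (fun x => ρ x * g x - c * ρ x) μ := hρg.sub (hρint.const_mul c)
    have hI1 : Integrable (fun x => ρ x * g x - c * ρ x - M * g x) μ :=
      hI2.sub (hg.const_mul M)
    rw [h1, integral_add hI1 (integrable_const _), integral_sub hI2 (hg.const_mul M),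
      integral_sub hρg (hρint.const_mul c), integral_const_mul, integral_const_mul,
      integral_const, ← hM, ← hc]
    simp only [measure_univ, probReal_univ, ENNReal.toReal_one, one_smul]
    ring
  -- Cauchy–Schwarz on the cross term
  have hcs : |∫ x, (ρ x - M) * (g x - c) ∂μ|
      ≤ Real.sqrt (∫ x, (ρ x - M) ^ 2 ∂μ) * Real.sqrt (∫ x, (g x - c) ^ 2 ∂μ) := by
    calc |∫ x, (ρ x - M) * (g x - c) ∂μ| ≤ ∫ x, |ρ x - M| * |g x - c| ∂μ := by
          simpa using
            norm_integral_le_integral_norm (μ := μ) (f := fun x => (ρ x - M) * (g x - c))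
      _ ≤ _ := cs_int ((hρ_meas.sub_const M).aestronglyMeasurable)
          (hgm.sub aestronglyMeasurable_const) hρM2 hgc2
  have hG2nn : (0:ℝ) ≤ Real.sqrt (∫ x, ‖G x‖ ^ 2 ∂μ) := Real.sqrt_nonneg _
  have part1 : M * |c| ≤ |∫ x, ρ x * g x ∂μ|
      + Real.sqrt (∫ x, (ρ x - M) ^ 2 ∂μ) * Real.sqrt (∫ x, ‖G x‖ ^ 2 ∂μ) := by
    have hkey : M * c = (∫ x, ρ x * g x ∂μ) - ∫ x, (ρ x - M) * (g x - c) ∂μ := by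
      rw [hcross]; ring
    calc M * |c| = |M * c| := by rw [abs_mul, abs_of_pos hMpos]
      _ ≤ |∫ x, ρ x * g x ∂μ| + |∫ x, (ρ x - M) * (g x - c) ∂μ| := by
          rw [hkey]; exact abs_sub _ _
      _ ≤ |∫ x, ρ x * g x ∂μ|
          + Real.sqrt (∫ x, (ρ x - M) ^ 2 ∂μ) * Real.sqrt (∫ x, (g x - c) ^ 2 ∂μ) := by
          linarith
      _ ≤ _ := by gcongr
  refine ⟨part1, ?_⟩
  -- part 2
  have hmink := mink hp hgm hgp c
  -- |∫ ρ g| ≤ √M √(∫ ρ g²)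
  have hsq : ∀ x, Real.sqrt (ρ x) * Real.sqrt (ρ x) = ρ x :=
    fun x => Real.mul_self_sqrt (hρ_nonneg x)
  have hrg : |∫ x, ρ x * g x ∂μ|
      ≤ Real.sqrt M * Real.sqrt (∫ x, ρ x * g x ^ 2 ∂μ) := by
    have key1 : (fun x => |ρ x| * |g x|)
        = fun x => |Real.sqrt (ρ x)| * |Real.sqrt (ρ x) * g x| := by
      funext x
      rw [abs_mul (Real.sqrt (ρ x)) (g x), abs_of_nonneg (hρ_nonneg x),
        abs_of_nonneg (Real.sqrt_nonneg (ρ x)), ← mul_assoc, hsq x]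
    have h2 := cs_int (μ := μ) (f := fun x => Real.sqrt (ρ x))
      (h := fun x => Real.sqrt (ρ x) * g x)
      (hρ_meas.sqrt.aestronglyMeasurable) (hρ_meas.sqrt.aestronglyMeasurable.mul hgm)
      (hρint.congr (Filter.Eventually.of_forall fun x => by
        show ρ x = Real.sqrt (ρ x) ^ 2; rw [Real.sq_sqrt (hρ_nonneg x)]))
      (hρg2.congr (Filter.Eventually.of_forall fun x => by
        show ρ x * g x ^ 2 = (Real.sqrt (ρ x) * g x) ^ 2; rw [mul_pow, Real.sq_sqrt (hρ_nonneg x)]))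
    beta_reduce at h2
    have e1 : ∫ x, Real.sqrt (ρ x) ^ 2 ∂μ = M := by
      rw [hM]
      exact integral_congr_ae (Filter.Eventually.of_forall fun x => by
        show Real.sqrt (ρ x) ^ 2 = ρ x; rw [Real.sq_sqrt (hρ_nonneg x)])
    have e2 : ∫ x, (Real.sqrt (ρ x) * g x) ^ 2 ∂μ = ∫ x, ρ x * g x ^ 2 ∂μ :=
      integral_congr_ae (Filter.Eventually.of_forall fun x => by
        show (Real.sqrt (ρ x) * g x) ^ 2 = ρ x * g x ^ 2; rw [mul_pow, Real.sq_sqrt (hρ_nonneg x)])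
    rw [e1, e2] at h2
    calc |∫ x, ρ x * g x ∂μ| ≤ ∫ x, |ρ x| * |g x| ∂μ := by
          simpa using norm_integral_le_integral_norm (μ := μ) (f := fun x => ρ x * g x)
      _ = ∫ x, |Real.sqrt (ρ x)| * |Real.sqrt (ρ x) * g x| ∂μ := by rw [key1]
      _ ≤ _ := h2
  -- ‖ρ - M‖₂ ≤ ‖ρ‖₂
  have hrm : Real.sqrt (∫ x, (ρ x - M) ^ 2 ∂μ) ≤ Real.sqrt (∫ x, ρ x ^ 2 ∂μ) := by
    apply Real.sqrt_le_sqrt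
    have h1 : (fun x => (ρ x - M) ^ 2) = fun x => (ρ x ^ 2 - (2*M) * ρ x) + M ^ 2 := by
      funext x; ring
    have hI : Integrable (fun x => ρ x ^ 2 - (2*M) * ρ x) μ := hρ2.sub (hρint.const_mul (2*M))
    rw [h1, integral_add hI (integrable_const _), integral_sub hρ2 (hρint.const_mul (2*M)),
      integral_const_mul, integral_const, ← hM]
    simp only [measure_univ, probReal_univ, ENNReal.toReal_one, one_smul]
    nlinarith [sq_nonneg M]
  have hcpos : |c| ≤ (|∫ x, ρ x * g x ∂μ|
      + Real.sqrt (∫ x, (ρ x - M) ^ 2 ∂μ) * Real.sqrt (∫ x, ‖G x‖ ^ 2 ∂μ)) / M :=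
    (le_div_iff₀ hMpos).mpr (by linarith [part1])
  have hQnn : (0:ℝ) ≤ Real.sqrt (∫ x, ρ x * g x ^ 2 ∂μ) := Real.sqrt_nonneg _
  have hsM : Real.sqrt M * Real.sqrt M = M := Real.mul_self_sqrt hMpos.le
  have hsMpos : (0:ℝ) < Real.sqrt M := Real.sqrt_pos.mpr hMpos
  calc (∫ x, |g x| ^ p ∂μ) ^ (1 / p)
      ≤ (∫ x, |g x - c| ^ p ∂μ) ^ (1 / p) + |c| := hmink
    _ ≤ Cp * Real.sqrt (∫ x, ‖G x‖ ^ 2 ∂μ) + (|∫ x, ρ x * g x ∂μ|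
        + Real.sqrt (∫ x, (ρ x - M) ^ 2 ∂μ) * Real.sqrt (∫ x, ‖G x‖ ^ 2 ∂μ)) / M :=
        add_le_add hSobolev hcpos
    _ ≤ Cp * Real.sqrt (∫ x, ‖G x‖ ^ 2 ∂μ) + (Real.sqrt M * Real.sqrt (∫ x, ρ x * g x ^ 2 ∂μ)
        + Real.sqrt (∫ x, ρ x ^ 2 ∂μ) * Real.sqrt (∫ x, ‖G x‖ ^ 2 ∂μ)) / M := by
        gcongr
    _ = _ := by
        have hdiv : Real.sqrt M / M = 1 / Real.sqrt M := by
          rw [div_eq_div_iff hMpos.ne' hsMpos.ne', hsM, one_mul]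
        have e : (Real.sqrt M * Real.sqrt (∫ x, ρ x * g x ^ 2 ∂μ)
            + Real.sqrt (∫ x, ρ x ^ 2 ∂μ) * Real.sqrt (∫ x, ‖G x‖ ^ 2 ∂μ)) / M
            = 1 / Real.sqrt M * Real.sqrt (∫ x, ρ x * g x ^ 2 ∂μ)
              + Real.sqrt (∫ x, ρ x ^ 2 ∂μ) / M * Real.sqrt (∫ x, ‖G x‖ ^ 2 ∂μ) := by
          rw [← hdiv]; ring
        rw [e]; ring
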